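/- Characteristic function of the privacy loss of the Gaussian mechanism: let σ > 0, let P be the Gaussian distribution on ℝ with mean 1 and variance σ², and Q the Gaussian distribution on ℝ with mean 0 and variance σ². The log density ratio is log(p(x)/q(x)) = (2x − 1)/(2σ²), where p and q are the Lebesgue densities of P and Q. Then for every t ∈ ℝ, ∫_ℝ exp(i·t·(2x−1)/(2σ²)) dP(x) = exp(−(t² − i·t)/(2σ²)); the same formula holds for ∫_ℝ exp(i·t·(1−2x)/(2σ²)) dQ(x). -/

import Mathlib

open MeasureTheory ProbabilityTheory Real Complex
open scoped ENNReal NNReal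


lemma gauss_int (σ : ℝ) (hσ : 0 < σ) (μ : ℝ) (a : ℂ) :
    ∫ x : ℝ, Complex.exp (a * x) ∂(gaussianReal μ ⟨σ ^ 2, sq_nonneg σ⟩)
      = Complex.exp (a * μ + a ^ 2 * σ ^ 2 / 2) := by
  have hv : (⟨σ ^ 2, sq_nonneg σ⟩ : NNReal) ≠ 0 := by
    simp [← NNReal.coe_ne_zero, (pow_pos hσ 2).ne']
  rw [gaussianReal_of_var_ne_zero μ hv]
  have hmeas : Measurable fun x : ℝ => (gaussianPDFReal μ ⟨σ ^ 2, sq_nonneg σ⟩ x).toNNReal :=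
    (measurable_gaussianPDFReal _ _).real_toNNReal
  have hpdf : gaussianPDF μ ⟨σ ^ 2, sq_nonneg σ⟩
      = fun x => ((fun x : ℝ => (gaussianPDFReal μ ⟨σ ^ 2, sq_nonneg σ⟩ x).toNNReal) x : ℝ≥0∞) := by
    ext x; rfl
  rw [hpdf, integral_withDensity_eq_integral_smul hmeas]
  have hσ2 : (0:ℝ) < 2 * σ ^ 2 := by positivity
  have key : ∀ x : ℝ,
      ((gaussianPDFReal μ ⟨σ ^ 2, sq_nonneg σ⟩ x).toNNReal : ℝ≥0) • Complex.exp (a * x)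
        = (↑(√(2 * π * σ ^ 2)))⁻¹ *
          Complex.exp (((-(1 / (2 * σ ^ 2)) : ℝ) : ℂ) * x ^ 2 + (μ / σ ^ 2 + a) * x
            + (-(μ ^ 2) / (2 * σ ^ 2))) := by
    intro x
    erw [NNReal.smul_def, Real.coe_toNNReal _ (gaussianPDFReal_nonneg _ _ _)]
    simp only [gaussianPDFReal]; change ((√(2 * π * σ ^ 2))⁻¹ * Real.exp (-(x - μ) ^ 2 / (2 * σ ^ 2))) • Complex.exp (a * x) = _; rw [Complex.real_smul]
    push_cast
    rw [mul_assoc]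
    congr 1
    rw [← Complex.exp_add]
    congr 1
    have hs : ((σ:ℂ) ^ 2) ≠ 0 := by
      have h0 : (σ:ℂ) ≠ 0 := by exact_mod_cast hσ.ne'
      exact pow_ne_zero 2 h0
    set s := (σ:ℂ) ^ 2 with hsdef
    field_simp
    ring
  simp_rw [key]
  rw [integral_const_mul, integral_cexp_quadratic (by rw [Complex.ofReal_re]; simp; positivity) _ _]
  have h2πσ : (0:ℝ) < 2 * π * σ ^ 2 := by positivity
  have hb : (↑π / -(((-(1 / (2 * σ ^ 2)) : ℝ)) : ℂ)) = ((2 * π * σ ^ 2 : ℝ) : ℂ) := by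
    push_cast
    have h0 : (σ:ℂ) ≠ 0 := by exact_mod_cast hσ.ne'
    field_simp
  rw [hb, show ((1:ℂ)/2) = ((1/2 : ℝ) : ℂ) by norm_num,
    ← Complex.ofReal_cpow h2πσ.le, ← Real.rpow_natCast, Real.rpow_natCast,
    ← Real.sqrt_eq_rpow]
  rw [← mul_assoc, ← Complex.ofReal_inv, ← Complex.ofReal_mul,
    inv_mul_cancel₀ (Real.sqrt_ne_zero'.mpr h2πσ), Complex.ofReal_one, one_mul]
  congr 1
  have h0 : (σ:ℂ) ≠ 0 := by exact_mod_cast hσ.ne'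
  push_cast
  field_simp
  ring



/-- Characteristic function of the privacy loss of the Gaussian mechanism: for `P = N(1,σ²)`
and `Q = N(0,σ²)`, the log density ratio is `(2x−1)/(2σ²)`, and its characteristic function
under `P` (and the one of the reversed loss `(1−2x)/(2σ²)` under `Q`) equals
`exp(−(t² − i·t)/(2σ²))`. -/
theorem gaussian_privacy_loss_charFun (σ : ℝ) (hσ : 0 < σ) :
    (∀ x : ℝ,
      Real.log ((1 / Real.sqrt (2 * π * σ ^ 2) * Real.exp (-(x - 1) ^ 2 / (2 * σ ^ 2)))
          / (1 / Real.sqrt (2 * π * σ ^ 2) * Real.exp (-x ^ 2 / (2 * σ ^ 2))))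
        = (2 * x - 1) / (2 * σ ^ 2))
    ∧ (∀ t : ℝ,
      ∫ x : ℝ, Complex.exp (Complex.I * t * (((2 * x - 1) / (2 * σ ^ 2) : ℝ) : ℂ))
          ∂(gaussianReal 1 ⟨σ ^ 2, sq_nonneg σ⟩)
        = Complex.exp (-(((t : ℂ) ^ 2 - Complex.I * t) / (2 * (σ : ℂ) ^ 2))))
    ∧ (∀ t : ℝ,
      ∫ x : ℝ, Complex.exp (Complex.I * t * (((1 - 2 * x) / (2 * σ ^ 2) : ℝ) : ℂ))
          ∂(gaussianReal 0 ⟨σ ^ 2, sq_nonneg σ⟩)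
        = Complex.exp (-(((t : ℂ) ^ 2 - Complex.I * t) / (2 * (σ : ℂ) ^ 2)))) := by
  have h0 : (σ:ℂ) ≠ 0 := by exact_mod_cast hσ.ne'
  have hs : ((σ:ℂ) ^ 2) ≠ 0 := pow_ne_zero 2 h0
  have h2πσ : (0:ℝ) < 2 * π * σ ^ 2 := by positivity
  refine ⟨fun x => ?_, fun t => ?_, fun t => ?_⟩
  · rw [mul_div_mul_left _ _ (by positivity : (1:ℝ) / √(2 * π * σ ^ 2) ≠ 0),
      ← Real.exp_sub, Real.log_exp]
    have hσ2 : (σ:ℝ) ^ 2 ≠ 0 := by positivity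
    field_simp
    ring
  · have h : ∀ x : ℝ, Complex.exp (Complex.I * t * (((2 * x - 1) / (2 * σ ^ 2) : ℝ) : ℂ))
        = Complex.exp (Complex.I * t * (-1 / (2 * (σ:ℂ) ^ 2)))
          * Complex.exp ((Complex.I * t / (σ:ℂ) ^ 2) * x) := by
      intro x
      rw [← Complex.exp_add]
      congr 1
      push_cast
      field_simp
      ring
    simp_rw [h, integral_const_mul]
    rw [gauss_int σ hσ 1 (Complex.I * t / (σ:ℂ) ^ 2), ← Complex.exp_add]
    congr 1
    have hsq : (Complex.I * t / (σ:ℂ) ^ 2) ^ 2 = -((t:ℂ) ^ 2) / ((σ:ℂ) ^ 2) ^ 2 := by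
      rw [div_pow, mul_pow, Complex.I_sq]; ring
    rw [hsq]
    revert hs
    generalize ((σ:ℂ) ^ 2) = s
    intro hs
    rw [Complex.ofReal_one, mul_one]
    field_simp
    have hss : s ^ 4 * s⁻¹ ^ 4 = 1 := by
      rw [← mul_pow, mul_inv_cancel₀ hs, one_pow]
    linear_combination
  · have h : ∀ x : ℝ, Complex.exp (Complex.I * t * (((1 - 2 * x) / (2 * σ ^ 2) : ℝ) : ℂ))
        = Complex.exp (Complex.I * t * (1 / (2 * (σ:ℂ) ^ 2)))
          * Complex.exp ((-(Complex.I * t) / (σ:ℂ) ^ 2) * x) := by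
      intro x
      rw [← Complex.exp_add]
      congr 1
      push_cast
      field_simp
      ring
    simp_rw [h, integral_const_mul]
    rw [gauss_int σ hσ 0 (-(Complex.I * t) / (σ:ℂ) ^ 2), ← Complex.exp_add]
    congr 1
    have hsq : (-(Complex.I * t) / (σ:ℂ) ^ 2) ^ 2 = -((t:ℂ) ^ 2) / ((σ:ℂ) ^ 2) ^ 2 := by
      rw [div_pow, neg_pow, mul_pow, Complex.I_sq]; ring
    rw [hsq]
    revert hs
    generalize ((σ:ℂ) ^ 2) = s
    intro hs
    field_simp
    push_cast; ring
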